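/- Let G be a topological group whose topology is induced by a left-invariant metric d (i.e., d(gx, gy) = d(x, y) for all g, x, y ∈ G) for which all closed balls are compact, and let Γ ⊆ G be a discrete subgroup. Define F = {x ∈ G : d(x,e) < d(x,γ) for all γ ∈ Γ ∖ {1}} and F' = {x ∈ G : d(x,e) ≤ d(x,γ) for all γ ∈ Γ ∖ {1}}. Then F ∩ γF = ∅ for every γ ∈ Γ ∖ {1}, and Γ·F' = G. -/

import Mathlib

open scoped Pointwise

/-- Dirichlet domain, fundamental domain properties.  Let `G` be a
topological group whose topology comes from a left-invariant metric with compact closed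
balls, and `Γ ≤ G` discrete.  With `F = {x : d(x,1) < d(x,γ) ∀ γ ∈ Γ∖{1}}` and
`F' = {x : d(x,1) ≤ d(x,γ) ∀ γ ∈ Γ∖{1}}`, one has `F ∩ γF = ∅` for `γ ∈ Γ∖{1}`,
and `Γ·F' = G`. -/
theorem stmt10 {G : Type*} [Group G] [MetricSpace G] [IsTopologicalGroup G] [ProperSpace G]
    (hinv : ∀ g x y : G, dist (g * x) (g * y) = dist x y)
    (Γ : Subgroup G) (hdisc : DiscreteTopology ↥Γ) :
    (∀ γ ∈ Γ, γ ≠ 1 →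
      {x : G | ∀ δ ∈ Γ, δ ≠ 1 → dist x 1 < dist x δ} ∩
        ((γ * ·) '' {x : G | ∀ δ ∈ Γ, δ ≠ 1 → dist x 1 < dist x δ}) = ∅) ∧
    (Γ : Set G) * {x : G | ∀ δ ∈ Γ, δ ≠ 1 → dist x 1 ≤ dist x δ} = Set.univ := by
  constructor
  · rintro γ hγ hγ1
    ext x
    simp only [Set.mem_inter_iff, Set.mem_image, Set.mem_setOf_eq, Set.mem_empty_iff_false,
      iff_false, not_and]
    rintro hx ⟨y, hy, rfl⟩
    have h1 := hx γ hγ hγ1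
    have h2 := hy γ⁻¹ (Γ.inv_mem hγ) (by simpa using hγ1)
    have e1 : dist (γ * y) γ = dist y 1 := by
      have := hinv γ y 1; simpa using this
    have e2 : dist y γ⁻¹ = dist (γ * y) 1 := by
      have := hinv γ y γ⁻¹; simpa using this.symm
    rw [e1] at h1
    rw [e2] at h2
    linarith
  · ext g
    simp only [Set.mem_univ, iff_true]
    have hcl : IsClosed (Γ : Set G) := Subgroup.isClosed_of_discrete
    obtain ⟨γ₀, hγ₀Γ, hmin⟩ := hcl.exists_infDist_eq_dist ⟨1, Γ.one_mem⟩ g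
    have key : ∀ c ∈ (Γ : Set G), dist g γ₀ ≤ dist g c := fun c hc =>
      hmin ▸ Metric.infDist_le_dist_of_mem hc
    refine ⟨γ₀, hγ₀Γ, γ₀⁻¹ * g, ?_, by group⟩
    intro δ hδ hδ1
    have h := key (γ₀ * δ) (Γ.mul_mem hγ₀Γ hδ)
    have e1 : dist (γ₀⁻¹ * g) 1 = dist g γ₀ := by
      have := hinv γ₀ (γ₀⁻¹ * g) 1; simpa [← mul_assoc] using this.symm
    have e2 : dist (γ₀⁻¹ * g) δ = dist g (γ₀ * δ) := by
      have := hinv γ₀ (γ₀⁻¹ * g) δ; simpa [← mul_assoc] using this.symm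
    rw [e1, e2]; exact h
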